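/- Let g be a linear operator on a finite-dimensional vector space over a field of characteristic zero such that (g^m - 1)^2 = 0 for some positive integer m. If g is unipotent, then (g - 1)^2 = 0. -/

import Mathlib

/-- If `(g^m - 1)^2 = 0` for some positive integer `m` and `g` is unipotent,
then `(g - 1)^2 = 0`. -/
theorem lemma_level2_unipotent {K V : Type*} [Field K] [CharZero K] [AddCommGroup V]
    [Module K V] [FiniteDimensional K V] (g : Module.End K V) (m : ℕ) (hm : 0 < m)
    (h : (g ^ m - 1) ^ 2 = 0) (hunip : ∃ N : ℕ, (g - 1) ^ N = 0) :
    (g - 1) ^ 2 = 0 := by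
  obtain ⟨N, hN⟩ := hunip
  set n : Module.End K V := g - 1 with hn
  have hnil : IsNilpotent n := ⟨N, hN⟩
  have hg : g = n + 1 := by rw [hn]; abel
  set u : Module.End K V :=
    ∑ k ∈ Finset.range m, n ^ k * ((m.choose (k + 1) : ℕ) : Module.End K V) with hu
  have hexp : g ^ m - 1 = n * u := by
    rw [hg, (Commute.one_right n).add_pow, Finset.sum_range_succ']
    simp only [pow_zero, Nat.choose_zero_right, Nat.cast_one, mul_one, one_mul, one_pow]
    rw [add_sub_cancel_right, hu, Finset.mul_sum]
    refine Finset.sum_congr rfl fun k _ => ?_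
    rw [pow_succ', mul_assoc]
  have hcomm : Commute n u := by
    refine Commute.sum_right _ _ _ fun k _ => ?_
    exact ((Commute.refl n).pow_right k).mul_right (Nat.commute_cast n _)
  have hunit : IsUnit u := by
    obtain ⟨m', rfl⟩ := Nat.exists_eq_succ_of_ne_zero hm.ne'
    set v : Module.End K V :=
      ∑ k ∈ Finset.range m', n ^ k * (((m' + 1).choose (k + 2) : ℕ) : Module.End K V) with hv
    have hsplit : u = ((m' + 1 : ℕ) : Module.End K V) + n * v := by
      rw [hu, Finset.sum_range_succ', hv, Finset.mul_sum, add_comm]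
      congr 1
      · simp
      · refine Finset.sum_congr rfl fun k _ => ?_
        rw [pow_succ', mul_assoc]
    rw [hsplit]
    have hcomm2 : Commute (n * v) (((m' + 1 : ℕ) : Module.End K V)) :=
      Nat.commute_cast _ _
    have hnil2 : IsNilpotent (n * v) := by
      refine Commute.isNilpotent_mul_right ?_ hnil
      refine Commute.sum_right _ _ _ fun k _ => ?_
      exact ((Commute.refl n).pow_right k).mul_right (Nat.commute_cast n _)
    have hmu : IsUnit ((m' + 1 : ℕ) : Module.End K V) := by
      have heq : ((m' + 1 : ℕ) : Module.End K V) =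
          algebraMap K (Module.End K V) ((m' + 1 : ℕ) : K) := by
        simp
      rw [heq]
      exact (isUnit_iff_ne_zero.mpr (Nat.cast_ne_zero.mpr m'.succ_ne_zero)).map _
    exact hnil2.isUnit_add_left_of_commute hmu hcomm2
  have h2 : n ^ 2 * u ^ 2 = 0 := by
    rw [← hcomm.mul_pow, ← hexp]; exact h
  exact (hunit.pow 2).mul_left_eq_zero.mp h2
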